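/- Let ρ = 100ε with ε ∈ (ω(√(log n / n)), 0.001). Sample (P, G) where P ∈ {0,1}ⁿ is uniform and each pair (vᵢ, vⱼ) is an edge independently with probability 1/2 + ρ if Pᵢ = Pⱼ and 1/2 − ρ otherwise. Then with probability ≥ 1 − n^{−Ω(1)}: for every clustering 𝒞 = (C₁,…,C_k) of the vertices, either max_{i≠j} (|Cᵢ ∩ {t : Pₜ = 0}| + |Cⱼ ∩ {t : Pₜ = 1}|) > 0.9n, or cost_G(𝒞) ≥ cost_G(P) + εn², where cost_G(P) is the cost of the two-cluster clustering induced by P. -/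

import Mathlib

open Finset

-- Unordered pairs of distinct vertices, encoded as ordered pairs `(u,v)` with `u < v`.
abbrev PairIdx (n : ℕ) := {p : Fin n × Fin n // p.1 < p.2}

-- Correlation clustering cost of the clustering given by the labelling `c`
-- on the graph `g`: the number of non-edges inside clusters plus edges across clusters.
open Classical in
noncomputable def ccCost {n : ℕ} {L : Type*} (g : PairIdx n → Bool) (c : Fin n → L) : ℝ :=
  ∑ p : PairIdx n, if ((g p = true) ↔ (c p.val.1 = c p.val.2)) then 0 else 1

-- Density of the planted-partition distribution: `P ∈ {0,1}ⁿ` uniform, then each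
-- pair is an edge independently with probability `1/2 + ρ` if the endpoints agree
-- under `P` and `1/2 − ρ` otherwise.
open Classical in
noncomputable def plantedDensity (n : ℕ) (ρ : ℝ) (P : Fin n → Bool)
    (g : PairIdx n → Bool) : ℝ :=
  ((2 : ℝ) ^ n)⁻¹ * ∏ p : PairIdx n,
    (if ((g p = true) ↔ (P p.val.1 = P p.val.2)) then 1/2 + ρ else 1/2 - ρ)

-- Cut size of the partition `P` in the graph `g`.
open Classical in
noncomputable def cutSize {n : ℕ} (g : PairIdx n → Bool) (P : Fin n → Bool) : ℝ :=
  ∑ p : PairIdx n, if (g p = true ∧ P p.val.1 ≠ P p.val.2) then 1 else 0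

lemma sum_fun_prod {I β : Type*} [Fintype I] [DecidableEq I] [Fintype β]
    (f : I → β → ℝ) : ∑ g : I → β, ∏ i, f i (g i) = ∏ i, ∑ b, f i b := by
  rw [Finset.prod_univ_sum, Fintype.piFinset_univ]

lemma pair_sum {n : ℕ} (F : Fin n → Fin n → ℝ) (hsym : ∀ u v, F u v = F v u)
    (hdiag : ∀ u, F u u = 0) :
    ∑ u : Fin n, ∑ v : Fin n, F u v = 2 * ∑ p : PairIdx n, F p.val.1 p.val.2 := by
  classical
  have h0 : ∑ u : Fin n, ∑ v : Fin n, F u v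
      = ∑ q : Fin n × Fin n, F q.1 q.2 := by
    rw [← Finset.sum_product']; simp
  have hsub : ∑ p : PairIdx n, F p.val.1 p.val.2
      = ∑ q : Fin n × Fin n, (if q.1 < q.2 then F q.1 q.2 else 0) := by
    rw [← Finset.sum_filter]
    exact (Finset.sum_subtype (univ.filter (fun q : Fin n × Fin n => q.1 < q.2))
      (fun q => by simp) (fun q : Fin n × Fin n => F q.1 q.2)).symm
  have hpt : ∀ q : Fin n × Fin n, F q.1 q.2 =
      (if q.1 < q.2 then F q.1 q.2 else 0) + (if q.2 < q.1 then F q.1 q.2 else 0) := by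
    intro q
    rcases lt_trichotomy q.1 q.2 with h | h | h
    · simp [h, asymm h]
    · simp [h, lt_irrefl, hdiag q.2]
    · simp [h, asymm h]
  have hswap : ∑ q : Fin n × Fin n, (if q.2 < q.1 then F q.1 q.2 else 0)
      = ∑ q : Fin n × Fin n, (if q.1 < q.2 then F q.1 q.2 else 0) := by
    rw [← Equiv.sum_comp (Equiv.prodComm (Fin n) (Fin n))]
    apply Finset.sum_congr rfl
    intro q _
    simp [hsym q.1 q.2]
    exact if_congr Iff.rfl rfl rfl
  rw [h0, hsub]
  calc ∑ q : Fin n × Fin n, F q.1 q.2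
      = ∑ q : Fin n × Fin n, ((if q.1 < q.2 then F q.1 q.2 else 0)
          + (if q.2 < q.1 then F q.1 q.2 else 0)) := Finset.sum_congr rfl (fun q _ => hpt q)
    _ = 2 * ∑ q : Fin n × Fin n, (if q.1 < q.2 then F q.1 q.2 else 0) := by
        rw [Finset.sum_add_distrib, hswap]; ring

lemma exp_le_quad' {x : ℝ} (hx : |x| ≤ 1) : Real.exp x ≤ 1 + x + x ^ 2 := by
  have h := Real.exp_bound hx (n := 2) (by norm_num)
  have h2 : ∑ m ∈ Finset.range 2, x ^ m / (Nat.factorial m : ℝ) = 1 + x := by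
    simp [Finset.sum_range_succ, Nat.factorial]
  rw [h2] at h
  have h3 := (abs_le.mp h).2
  have hxx : |x| ^ 2 * ((3:ℕ) / ((2:ℕ).factorial * (2:ℕ)) : ℝ) ≤ x ^ 2 := by
    rw [sq_abs]
    have : ((3:ℕ) / ((2:ℕ).factorial * (2:ℕ)) : ℝ) ≤ 1 := by norm_num [Nat.factorial]
    nlinarith [sq_nonneg x]
  nlinarith

lemma mgf_pair' {ρ t : ℝ} (hρ : 0 ≤ ρ) (ht : 0 ≤ t) (ht1 : t ≤ 1) :
    (1/2 + ρ) * Real.exp (-t) + (1/2 - ρ) * Real.exp t ≤ Real.exp (t^2 - 2*ρ*t) := by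
  have h2a := exp_le_quad' (x := t) (by rwa [abs_of_nonneg ht])
  have h2b := exp_le_quad' (x := -t) (by rwa [abs_neg, abs_of_nonneg ht])
  have h3 : t ≤ Real.sinh t := Real.self_le_sinh_iff.mpr ht
  rw [Real.sinh_eq] at h3
  have h4 := Real.add_one_le_exp (t^2 - 2*ρ*t)
  have h5 : ρ * (2*t) ≤ ρ * (Real.exp t - Real.exp (-t)) := by
    apply mul_le_mul_of_nonneg_left _ hρ; linarith
  nlinarith

lemma count_pairs_eq {K : Type*} [Fintype K] [DecidableEq K] {n : ℕ} (φ : Fin n → K) :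
    ∑ u : Fin n, ∑ v : Fin n, (if φ u = φ v then (1:ℝ) else 0)
    = ∑ k : K, ((univ.filter fun t => φ t = k).card : ℝ)^2 := by
  classical
  have inner : ∀ u, ∑ v : Fin n, (if φ u = φ v then (1:ℝ) else 0)
      = ((univ.filter fun t => φ t = φ u).card : ℝ) := by
    intro u
    rw [Finset.sum_boole]
    congr 1
    simp only [eq_comm]
  calc ∑ u : Fin n, ∑ v : Fin n, (if φ u = φ v then (1:ℝ) else 0)
      = ∑ u : Fin n, ((univ.filter fun t => φ t = φ u).card : ℝ) :=
        Finset.sum_congr rfl (fun u _ => inner u)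
    _ = ∑ k : K, ∑ u ∈ univ.filter (fun u => φ u = k),
          ((univ.filter fun t => φ t = φ u).card : ℝ) :=
        (Finset.sum_fiberwise univ φ _).symm
    _ = ∑ k : K, ((univ.filter fun t => φ t = k).card : ℝ)^2 := by
        apply Finset.sum_congr rfl
        intro k _
        have : ∑ u ∈ univ.filter (fun u => φ u = k),
            ((univ.filter fun t => φ t = φ u).card : ℝ)
            = ∑ _u ∈ univ.filter (fun u => φ u = k),
              ((univ.filter fun t => φ t = k).card : ℝ) := by
          apply Finset.sum_congr rfl
          intro u hu
          rw [(Finset.mem_filter.mp hu).2]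
        rw [this, Finset.sum_const, nsmul_eq_mul, sq]

lemma fiber_card_sum {n : ℕ} (P : Fin n → Bool) (c : Fin n → Fin n) (b : Bool) :
    ∑ i : Fin n, ((univ.filter fun t => c t = i ∧ P t = b).card : ℝ)
    = ((univ.filter fun t => P t = b).card : ℝ) := by
  classical
  rw [← Nat.cast_sum]
  congr 1
  rw [Finset.card_eq_sum_card_fiberwise (f := c) (t := univ) (fun x _ => Finset.mem_univ _)]
  apply Finset.sum_congr rfl
  intro i _
  congr 1
  ext t
  simp [and_comm]

lemma si_split {n : ℕ} (P : Fin n → Bool) (c : Fin n → Fin n) (i : Fin n) :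
    ((univ.filter fun t => c t = i).card : ℝ)
    = ((univ.filter fun t => c t = i ∧ P t = false).card : ℝ)
      + ((univ.filter fun t => c t = i ∧ P t = true).card : ℝ) := by
  classical
  rw [← Nat.cast_add]
  congr 1
  have h := Finset.card_filter_add_card_filter_not
    (s := univ.filter fun t => c t = i) (p := fun t => P t = false)
  have h1 : (univ.filter fun t => c t = i).filter (fun t => P t = false)
      = univ.filter fun t => c t = i ∧ P t = false := by rw [Finset.filter_filter]
  have h2 : (univ.filter fun t => c t = i).filter (fun t => ¬ P t = false)
      = univ.filter fun t => c t = i ∧ P t = true := by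
    rw [Finset.filter_filter]
    apply Finset.filter_congr
    intro t _
    simp
  rw [h1, h2] at h
  omega

lemma master_identity {n : ℕ} (P : Fin n → Bool) (c : Fin n → Fin n) :
    ∑ u : Fin n, ∑ v : Fin n, (if (c u = c v) ↔ (P u = P v) then (0:ℝ) else 1)
    = ((univ.filter fun t => P t = false).card : ℝ)^2
      + ((univ.filter fun t => P t = true).card : ℝ)^2
      - ∑ i : Fin n, ((univ.filter fun t => c t = i ∧ P t = false).card : ℝ)^2
      - ∑ i : Fin n, ((univ.filter fun t => c t = i ∧ P t = true).card : ℝ)^2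
      + 2 * ∑ i : Fin n, ((univ.filter fun t => c t = i ∧ P t = false).card : ℝ)
          * ((univ.filter fun t => c t = i ∧ P t = true).card : ℝ) := by
  classical
  have hpt : ∀ u v : Fin n, (if (c u = c v) ↔ (P u = P v) then (0:ℝ) else 1)
      = (if c u = c v then (1:ℝ) else 0) + (if P u = P v then (1:ℝ) else 0)
        - 2 * (if (fun t => (c t, P t)) u = (fun t => (c t, P t)) v then (1:ℝ) else 0) := by
    intro u v
    by_cases h1 : c u = c v <;> by_cases h2 : P u = P v <;>
      simp [h1, h2, Prod.ext_iff] <;> norm_num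
  have hc := count_pairs_eq (φ := c)
  have hP := count_pairs_eq (φ := P)
  have hcp := count_pairs_eq (φ := fun t : Fin n => (c t, P t))
  rw [Fintype.sum_bool] at hP
  rw [Fintype.sum_prod_type] at hcp
  have hcp2 : ∑ k : Fin n, ∑ b : Bool,
      ((univ.filter fun t => (c t, P t) = (k, b)).card : ℝ)^2
      = (∑ i : Fin n, ((univ.filter fun t => c t = i ∧ P t = false).card : ℝ)^2)
        + ∑ i : Fin n, ((univ.filter fun t => c t = i ∧ P t = true).card : ℝ)^2 := by
    rw [← Finset.sum_add_distrib]
    apply Finset.sum_congr rfl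
    intro i _
    rw [Fintype.sum_bool]
    have e : ∀ b : Bool, (univ.filter fun t => (c t, P t) = (i, b))
        = univ.filter fun t => c t = i ∧ P t = b := by
      intro b
      apply Finset.filter_congr
      intro t _
      simp [Prod.ext_iff]
    rw [e true, e false]
    ring
  rw [hcp2] at hcp
  have hsi : ∑ i : Fin n, ((univ.filter fun t => c t = i).card : ℝ)^2
      = (∑ i : Fin n, ((univ.filter fun t => c t = i ∧ P t = false).card : ℝ)^2)
        + (∑ i : Fin n, ((univ.filter fun t => c t = i ∧ P t = true).card : ℝ)^2)
        + 2 * ∑ i : Fin n, ((univ.filter fun t => c t = i ∧ P t = false).card : ℝ)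
            * ((univ.filter fun t => c t = i ∧ P t = true).card : ℝ) := by
    rw [Finset.mul_sum, ← Finset.sum_add_distrib, ← Finset.sum_add_distrib]
    apply Finset.sum_congr rfl
    intro i _
    rw [si_split P c i]
    ring
  have hsum : ∑ u : Fin n, ∑ v : Fin n, (if (c u = c v) ↔ (P u = P v) then (0:ℝ) else 1)
      = (∑ u : Fin n, ∑ v : Fin n, (if c u = c v then (1:ℝ) else 0))
        + (∑ u : Fin n, ∑ v : Fin n, (if P u = P v then (1:ℝ) else 0))
        - 2 * ∑ u : Fin n, ∑ v : Fin n,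
            (if (fun t => (c t, P t)) u = (fun t => (c t, P t)) v then (1:ℝ) else 0) := by
    simp_rw [hpt]
    simp only [Finset.sum_add_distrib, Finset.sum_sub_distrib, Finset.mul_sum]
  rw [hsum, hc, hP, hcp, hsi]
  ring

lemma lab_sum {n : ℕ} (P : Fin n → Bool) :
    ((univ.filter fun t => P t = false).card : ℝ)
      + ((univ.filter fun t => P t = true).card : ℝ) = n := by
  classical
  rw [← Nat.cast_add]
  have h := Finset.card_filter_add_card_filter_not
    (s := (univ : Finset (Fin n))) (p := fun t => P t = false)
  have h2 : (univ : Finset (Fin n)).filter (fun t => ¬ P t = false)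
      = univ.filter fun t => P t = true := by
    apply Finset.filter_congr; intro t _; simp
  rw [h2, Finset.card_univ, Fintype.card_fin] at h
  exact_mod_cast congrArg (Nat.cast : ℕ → ℝ) h

lemma misaligned_lb {n : ℕ} (P : Fin n → Bool) (c : Fin n → Fin n) (hn : 0 < n)
    (hz : 0.4 * (n:ℝ) ≤ ((univ.filter fun t => P t = false).card : ℝ))
    (ho : 0.4 * (n:ℝ) ≤ ((univ.filter fun t => P t = true).card : ℝ))
    (H : ∀ i j : Fin n, i ≠ j →
      ((univ.filter fun t => c t = i ∧ P t = false).card : ℝ)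
        + ((univ.filter fun t => c t = j ∧ P t = true).card : ℝ) ≤ 0.9 * n) :
    0.04 * (n:ℝ)^2 ≤ ∑ u : Fin n, ∑ v : Fin n,
      (if (c u = c v) ↔ (P u = P v) then (0:ℝ) else 1) := by
  classical
  rw [master_identity]
  set zf : Fin n → ℝ := fun i => ((univ.filter fun t => c t = i ∧ P t = false).card : ℝ)
    with hzf
  set of : Fin n → ℝ := fun i => ((univ.filter fun t => c t = i ∧ P t = true).card : ℝ)
    with hof
  set zL : ℝ := ((univ.filter fun t => P t = false).card : ℝ) with hzL
  set oL : ℝ := ((univ.filter fun t => P t = true).card : ℝ) with hoL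
  have hzfnn : ∀ i, 0 ≤ zf i := fun i => Nat.cast_nonneg _
  have hofnn : ∀ i, 0 ≤ of i := fun i => Nat.cast_nonneg _
  have hZsum : ∑ i, zf i = zL := fiber_card_sum P c false
  have hOsum : ∑ i, of i = oL := fiber_card_sum P c true
  have hlab : zL + oL = n := lab_sum P
  have hne : (univ : Finset (Fin n)).Nonempty := ⟨⟨0, hn⟩, mem_univ _⟩
  obtain ⟨i0, -, hi0⟩ := Finset.exists_max_image univ zf hne
  obtain ⟨j0, -, hj0⟩ := Finset.exists_max_image univ of hne
  set a : ℝ := zf i0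
  set b : ℝ := of j0
  have haz : a ≤ zL := hZsum ▸ Finset.single_le_sum (fun i _ => hzfnn i) (mem_univ i0)
  have hbo : b ≤ oL := hOsum ▸ Finset.single_le_sum (fun i _ => hofnn i) (mem_univ j0)
  have hSz : ∑ i, (zf i)^2 ≤ a * zL := by
    rw [← hZsum, Finset.mul_sum]
    apply Finset.sum_le_sum
    intro i _
    rw [sq]
    exact mul_le_mul_of_nonneg_right (hi0 i (mem_univ i)) (hzfnn i)
  have hSo : ∑ i, (of i)^2 ≤ b * oL := by
    rw [← hOsum, Finset.mul_sum]
    apply Finset.sum_le_sum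
    intro i _
    rw [sq]
    exact mul_le_mul_of_nonneg_right (hj0 i (mem_univ i)) (hofnn i)
  have hCnn : 0 ≤ ∑ i, zf i * of i :=
    Finset.sum_nonneg (fun i _ => mul_nonneg (hzfnn i) (hofnn i))
  have ha0 : 0 ≤ a := hzfnn i0
  have hb0 : 0 ≤ b := hofnn j0
  have hn0 : (0:ℝ) ≤ n := Nat.cast_nonneg n
  have hz0 : (0:ℝ) ≤ zL := le_trans (by positivity) hz
  have ho0 : (0:ℝ) ≤ oL := le_trans (by positivity) ho
  have q1 : a * zL ≤ zL^2 := by rw [sq]; exact mul_le_mul_of_nonneg_right haz hz0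
  have q2 : b * oL ≤ oL^2 := by rw [sq]; exact mul_le_mul_of_nonneg_right hbo ho0
  by_cases hij : i0 = j0
  · have hab : a * b ≤ ∑ i, zf i * of i := by
      have h1 : zf j0 * of j0 ≤ ∑ i, zf i * of i := by
        simpa using Finset.single_le_sum (f := fun i => zf i * of i)
          (fun i _ => mul_nonneg (hzfnn i) (hofnn i)) (mem_univ j0)
      have h2 : a = zf j0 := by show zf i0 = zf j0; rw [hij]
      rw [h2]
      exact h1
    by_cases ha2 : 0.2 * (n:ℝ) ≤ a
    · by_cases hb2 : 0.2 * (n:ℝ) ≤ b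
      · have p : 0.2 * (n:ℝ) * (0.2 * n) ≤ a * b :=
          mul_le_mul ha2 hb2 (by positivity) ha0
        have e : (0.2 * (n:ℝ)) * (0.2 * n) = 0.04 * (n:ℝ)^2 := by ring
        linarith
      · push_neg at hb2
        have hbb : 0.2 * (n:ℝ) ≤ oL - b := by linarith
        have r1 : 0.4 * (n:ℝ) * (oL - b) ≤ oL * (oL - b) :=
          mul_le_mul_of_nonneg_right ho (by linarith)
        have r2 : 0.4 * (n:ℝ) * (0.2 * n) ≤ 0.4 * (n:ℝ) * (oL - b) :=
          mul_le_mul_of_nonneg_left hbb (by positivity)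
        have e1 : oL * (oL - b) = oL^2 - b * oL := by ring
        have e2 : 0.4 * (n:ℝ) * (0.2 * n) = 0.08 * (n:ℝ)^2 := by ring
        linarith
    · push_neg at ha2
      have haa : 0.2 * (n:ℝ) ≤ zL - a := by linarith
      have r1 : 0.4 * (n:ℝ) * (zL - a) ≤ zL * (zL - a) :=
        mul_le_mul_of_nonneg_right hz (by linarith)
      have r2 : 0.4 * (n:ℝ) * (0.2 * n) ≤ 0.4 * (n:ℝ) * (zL - a) :=
        mul_le_mul_of_nonneg_left haa (by positivity)
      have e1 : zL * (zL - a) = zL^2 - a * zL := by ring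
      have e2 : 0.4 * (n:ℝ) * (0.2 * n) = 0.08 * (n:ℝ)^2 := by ring
      linarith
  · have hH := H i0 j0 hij
    have p1 : 0.4 * (n:ℝ) * (zL - a) ≤ zL * (zL - a) :=
      mul_le_mul_of_nonneg_right hz (by linarith)
    have p2 : 0.4 * (n:ℝ) * (oL - b) ≤ oL * (oL - b) :=
      mul_le_mul_of_nonneg_right ho (by linarith)
    have s1 : 0.4 * (n:ℝ) * (0.1 * n) ≤ 0.4 * (n:ℝ) * ((n:ℝ) - a - b) :=
      mul_le_mul_of_nonneg_left (by linarith) (by positivity)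
    have e1 : zL * (zL - a) = zL^2 - a * zL := by ring
    have e2 : oL * (oL - b) = oL^2 - b * oL := by ring
    have e3 : 0.4 * (n:ℝ) * ((n:ℝ) - a - b) = 0.4*(n:ℝ)*((zL - a) + (oL - b)) := by
      rw [← hlab]; ring
    have e4 : 0.4*(n:ℝ)*((zL - a) + (oL - b)) = 0.4*(n:ℝ)*(zL-a) + 0.4*(n:ℝ)*(oL-b) := by ring
    have e5 : 0.4 * (n:ℝ) * (0.1 * n) = 0.04 * (n:ℝ)^2 := by ring
    linarith

lemma chernoff_cost {n : ℕ} (ρ t aa : ℝ) (hρ0 : 0 ≤ ρ) (hρ : ρ ≤ 1/4)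
    (ht0 : 0 ≤ t) (ht1 : t ≤ 1)
    (P : Fin n → Bool) (c : Fin n → Fin n) :
    ∑ g : PairIdx n → Bool,
      (∏ p : PairIdx n, (if ((g p = true) ↔ (P p.val.1 = P p.val.2))
          then 1/2 + ρ else 1/2 - ρ))
        * (if ccCost g c < ccCost g P + aa then (1:ℝ) else 0)
    ≤ Real.exp (t * aa + (t^2 - 2*ρ*t) *
        ((univ.filter (fun p : PairIdx n =>
          ¬((c p.val.1 = c p.val.2) ↔ (P p.val.1 = P p.val.2)))).card : ℝ)) := by
  classical
  set w : PairIdx n → Bool → ℝ := fun p b =>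
    if ((b = true) ↔ (P p.val.1 = P p.val.2)) then 1/2 + ρ else 1/2 - ρ with hw
  set χP : PairIdx n → Bool → ℝ := fun p b =>
    if ((b = true) ↔ (P p.val.1 = P p.val.2)) then 0 else 1 with hχP
  set χc : PairIdx n → Bool → ℝ := fun p b =>
    if ((b = true) ↔ (c p.val.1 = c p.val.2)) then 0 else 1 with hχc
  have hwnn : ∀ p b, 0 ≤ w p b := by
    intro p b
    rw [hw]
    dsimp only
    split <;> linarith
  have hcostP : ∀ g : PairIdx n → Bool, ccCost g P = ∑ p : PairIdx n, χP p (g p) := by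
    intro g; unfold ccCost; rw [hχP]; congr!
  have hcostc : ∀ g : PairIdx n → Bool, ccCost g c = ∑ p : PairIdx n, χc p (g p) := by
    intro g; unfold ccCost; rw [hχc]; congr!
  -- step 1: indicator ≤ exponential
  have step1 : ∑ g : PairIdx n → Bool,
      (∏ p : PairIdx n, w p (g p)) * (if ccCost g c < ccCost g P + aa then (1:ℝ) else 0)
      ≤ ∑ g : PairIdx n → Bool,
        (∏ p : PairIdx n, w p (g p)) * Real.exp (t * (ccCost g P + aa - ccCost g c)) := by
    apply Finset.sum_le_sum
    intro g _
    apply mul_le_mul_of_nonneg_left _ (Finset.prod_nonneg (fun p _ => hwnn p (g p)))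
    split
    · rename_i h
      apply Real.one_le_exp
      apply mul_nonneg ht0
      linarith
    · positivity
  -- step 2: factorize the exponential
  have step2 : ∀ g : PairIdx n → Bool,
      (∏ p : PairIdx n, w p (g p)) * Real.exp (t * (ccCost g P + aa - ccCost g c))
      = Real.exp (t * aa) * ∏ p : PairIdx n,
          (w p (g p) * Real.exp (t * (χP p (g p) - χc p (g p)))) := by
    intro g
    rw [hcostP, hcostc, Finset.prod_mul_distrib]
    have hsub : (∑ p : PairIdx n, χP p (g p)) - (∑ p : PairIdx n, χc p (g p))
        = ∑ p : PairIdx n, (χP p (g p) - χc p (g p)) := (Finset.sum_sub_distrib _ _).symm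
    have : t * (∑ p : PairIdx n, χP p (g p) + aa - ∑ p : PairIdx n, χc p (g p))
        = t * aa + ∑ p : PairIdx n, t * (χP p (g p) - χc p (g p)) := by
      rw [← Finset.mul_sum, ← hsub]
      ring
    rw [this, Real.exp_add, Real.exp_sum]
    ring
  -- steps 3-5
  set f : PairIdx n → Bool → ℝ := fun p b =>
    w p b * Real.exp (t * (χP p b - χc p b)) with hf
  set B : PairIdx n → ℝ := fun p =>
    Real.exp ((t^2 - 2*ρ*t) * (if ¬((c p.val.1 = c p.val.2) ↔ (P p.val.1 = P p.val.2))
      then (1:ℝ) else 0)) with hB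
  have key : ∀ p : PairIdx n, (∑ b : Bool, f p b) ≤ B p := by
    intro p
    have hm := mgf_pair' hρ0 ht0 ht1
    rw [Fintype.sum_bool, hf, hB]
    by_cases hc : c p.val.1 = c p.val.2 <;> by_cases hP : P p.val.1 = P p.val.2 <;>
      dsimp only <;>
      rw [hw, hχP, hχc] <;>
      simp only [hc, hP] <;> norm_num <;>
      try simpa using hm
    linarith [hm]
  have fnn : ∀ p b, 0 ≤ f p b := fun p b =>
    mul_nonneg (hwnn p b) (Real.exp_nonneg _)
  calc ∑ g : PairIdx n → Bool,
      (∏ p : PairIdx n, w p (g p)) * (if ccCost g c < ccCost g P + aa then (1:ℝ) else 0)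
      ≤ ∑ g : PairIdx n → Bool,
        (∏ p : PairIdx n, w p (g p)) * Real.exp (t * (ccCost g P + aa - ccCost g c)) := step1
    _ = ∑ g : PairIdx n → Bool, Real.exp (t * aa) * ∏ p : PairIdx n, f p (g p) :=
        Finset.sum_congr rfl (fun g _ => step2 g)
    _ = Real.exp (t * aa) * ∑ g : PairIdx n → Bool, ∏ p : PairIdx n, f p (g p) := by
        rw [Finset.mul_sum]
    _ = Real.exp (t * aa) * ∏ p : PairIdx n, (∑ b : Bool, f p b) := by
        rw [sum_fun_prod]
    _ ≤ Real.exp (t * aa) * ∏ p : PairIdx n, B p := by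
        apply mul_le_mul_of_nonneg_left _ (Real.exp_nonneg _)
        exact Finset.prod_le_prod (fun p _ => Finset.sum_nonneg (fun b _ => fnn p b))
          (fun p _ => key p)
    _ = Real.exp (t * aa + (t^2 - 2*ρ*t) *
        ((univ.filter (fun p : PairIdx n =>
          ¬((c p.val.1 = c p.val.2) ↔ (P p.val.1 = P p.val.2)))).card : ℝ)) := by
        rw [hB]
        rw [← Real.exp_sum, ← Real.exp_add]
        congr 1
        rw [← Finset.mul_sum, Finset.sum_boole]

lemma coin_chernoff (n : ℕ) (v : Bool) :
    ∑ P : Fin n → Bool, ((2:ℝ)^n)⁻¹ *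
      (if 0.6 * (n:ℝ) < ((univ.filter fun t => P t = v).card : ℝ) then (1:ℝ) else 0)
    ≤ Real.exp (-0.01 * n) := by
  classical
  set χ : Bool → ℝ := fun b => if b = v then (1:ℝ) else 0 with hχ
  have hcard : ∀ P : Fin n → Bool,
      ((univ.filter fun t => P t = v).card : ℝ) = ∑ t : Fin n, χ (P t) := by
    intro P
    rw [hχ, Finset.sum_boole]
  have h1 : ∀ P : Fin n → Bool,
      (if 0.6 * (n:ℝ) < ((univ.filter fun t => P t = v).card : ℝ) then (1:ℝ) else 0)
      ≤ Real.exp (-0.12 * n) * ∏ t : Fin n, Real.exp (0.2 * χ (P t)) := by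
    intro P
    rw [← Real.exp_sum, ← Real.exp_add]
    split
    · rename_i h
      apply Real.one_le_exp
      rw [hcard] at h
      rw [← Finset.mul_sum]
      nlinarith [h]
    · positivity
  calc ∑ P : Fin n → Bool, ((2:ℝ)^n)⁻¹ *
        (if 0.6 * (n:ℝ) < ((univ.filter fun t => P t = v).card : ℝ) then (1:ℝ) else 0)
      ≤ ∑ P : Fin n → Bool, ((2:ℝ)^n)⁻¹ *
          (Real.exp (-0.12 * n) * ∏ t : Fin n, Real.exp (0.2 * χ (P t))) := by
        apply Finset.sum_le_sum
        intro P _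
        exact mul_le_mul_of_nonneg_left (h1 P) (by positivity)
    _ = ((2:ℝ)^n)⁻¹ * Real.exp (-0.12 * n)
        * ∑ P : Fin n → Bool, ∏ t : Fin n, Real.exp (0.2 * χ (P t)) := by
        rw [Finset.mul_sum]
        apply Finset.sum_congr rfl
        intro P _
        ring
    _ = ((2:ℝ)^n)⁻¹ * Real.exp (-0.12 * n) * (Real.exp 0.2 + 1)^n := by
        rw [sum_fun_prod (fun _ b => Real.exp (0.2 * χ b))]
        congr 1
        rw [Finset.prod_const, Finset.card_univ, Fintype.card_fin]
        congr 1
        rw [Fintype.sum_bool, hχ]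
        cases v <;> norm_num <;> ring
    _ ≤ Real.exp (-0.01 * n) := by
        have hb : Real.exp 0.2 + 1 ≤ 2 * Real.exp 0.11 := by
          have e1 : Real.exp 0.2 + 1 = Real.exp 0.1 * (Real.exp 0.1 + Real.exp (-0.1)) := by
            rw [mul_add, ← Real.exp_add, ← Real.exp_add]
            norm_num
          have e2 : Real.exp 0.1 + Real.exp (-0.1) ≤ 2 * (1 + (0.1:ℝ)^2) := by
            have a1 := exp_le_quad' (x := (0.1:ℝ)) (by rw [abs_of_nonneg] <;> norm_num)
            have a2 := exp_le_quad' (x := (-0.1:ℝ)) (by rw [abs_neg, abs_of_nonneg] <;> norm_num)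
            nlinarith
          have e3 : (1:ℝ) + (0.1:ℝ)^2 ≤ Real.exp 0.01 := by
            have := Real.add_one_le_exp (0.01:ℝ)
            norm_num at this ⊢
            linarith
          calc Real.exp 0.2 + 1 = Real.exp 0.1 * (Real.exp 0.1 + Real.exp (-0.1)) := e1
            _ ≤ Real.exp 0.1 * (2 * (1 + (0.1:ℝ)^2)) :=
              mul_le_mul_of_nonneg_left e2 (Real.exp_nonneg _)
            _ ≤ Real.exp 0.1 * (2 * Real.exp 0.01) := by nlinarith [Real.exp_nonneg (0.1:ℝ)]
            _ = 2 * (Real.exp 0.1 * Real.exp 0.01) := by ring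
            _ = 2 * Real.exp 0.11 := by rw [← Real.exp_add]; norm_num
        have hp : (Real.exp 0.2 + 1)^n ≤ (2 * Real.exp 0.11)^n := by
          apply pow_le_pow_left₀ (by positivity) hb
        have hsplit : (2 * Real.exp 0.11)^n = 2^n * Real.exp (0.11 * n) := by
          rw [mul_pow, ← Real.exp_nat_mul]
          ring_nf
        calc ((2:ℝ)^n)⁻¹ * Real.exp (-0.12 * n) * (Real.exp 0.2 + 1)^n
            ≤ ((2:ℝ)^n)⁻¹ * Real.exp (-0.12 * n) * (2^n * Real.exp (0.11 * n)) := by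
              rw [hsplit] at hp
              exact mul_le_mul_of_nonneg_left hp (by positivity)
          _ = Real.exp (-0.12 * n) * Real.exp (0.11 * n) := by
              field_simp
          _ = Real.exp (-0.01 * n) := by
              rw [← Real.exp_add]
              congr 1
              ring

lemma pair_mass {n : ℕ} (ρ : ℝ) (P : Fin n → Bool) :
    ∑ g : {p : Fin n × Fin n // p.1 < p.2} → Bool,
      ∏ p : {p : Fin n × Fin n // p.1 < p.2},
        (if ((g p = true) ↔ (P p.val.1 = P p.val.2)) then 1/2 + ρ else 1/2 - ρ) = 1 := by
  classical
  have h := sum_fun_prod (I := {p : Fin n × Fin n // p.1 < p.2}) (β := Bool)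
    (fun p b => (if ((b = true) ↔ (P p.val.1 = P p.val.2)) then 1/2 + ρ else 1/2 - ρ))
  rw [h, Finset.prod_eq_one]
  intro p _
  rw [Fintype.sum_bool]
  by_cases h : P p.val.1 = P p.val.2 <;> simp [h] <;> ring


lemma perc_bound {n : ℕ} (ε : ℝ) (hε : 0 < ε) (hε3 : ε ≤ 0.001) (hn0 : 0 < n)
    (P : Fin n → Bool) (c : Fin n → Fin n)
    (hz : 0.4 * (n:ℝ) ≤ ((univ.filter fun t => P t = false).card : ℝ))
    (ho : 0.4 * (n:ℝ) ≤ ((univ.filter fun t => P t = true).card : ℝ))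
    (H : ∀ i j : Fin n, i ≠ j →
      ((univ.filter fun t => c t = i ∧ P t = false).card : ℝ)
        + ((univ.filter fun t => c t = j ∧ P t = true).card : ℝ) ≤ 0.9 * n) :
    ∑ g : PairIdx n → Bool,
      (∏ p : PairIdx n, (if ((g p = true) ↔ (P p.val.1 = P p.val.2))
          then 1/2 + 100*ε else 1/2 - 100*ε))
        * (if ccCost g c < ccCost g P + ε * (n:ℝ)^2 then (1:ℝ) else 0)
    ≤ Real.exp (-2 * ε^2 * (n:ℝ)^2) := by
  classical
  have hch := chernoff_cost (n := n) (100*ε) ε (ε * (n:ℝ)^2) (by linarith) (by linarith)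
    (le_of_lt hε) (by linarith) P c
  set D := ((univ.filter (fun p : PairIdx n =>
    ¬((c p.val.1 = c p.val.2) ↔ (P p.val.1 = P p.val.2)))).card : ℝ) with hDdef
  have hml := misaligned_lb P c hn0 hz ho H
  have hsym : ∀ u v : Fin n,
      (if (c u = c v) ↔ (P u = P v) then (0:ℝ) else 1)
      = (if (c v = c u) ↔ (P v = P u) then (0:ℝ) else 1) := by
    intro u v
    have h1 : (c u = c v) = (c v = c u) := propext eq_comm
    have h2 : (P u = P v) = (P v = P u) := propext eq_comm
    simp only [h1, h2]
  have hdiag : ∀ u : Fin n, (if (c u = c u) ↔ (P u = P u) then (0:ℝ) else 1) = 0 := by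
    intro u; simp
  have hps := pair_sum (fun u v => if (c u = c v) ↔ (P u = P v) then (0:ℝ) else 1)
    hsym hdiag
  have hDsum : ∑ p : PairIdx n,
      (if (c p.val.1 = c p.val.2) ↔ (P p.val.1 = P p.val.2) then (0:ℝ) else 1) = D := by
    rw [hDdef, ← Finset.sum_boole]
    apply Finset.sum_congr rfl
    intro p _
    by_cases h : (c p.val.1 = c p.val.2) ↔ (P p.val.1 = P p.val.2) <;> simp [h]
  have hD : 0.02 * (n:ℝ)^2 ≤ D := by
    rw [hps, hDsum] at hml
    linarith
  apply le_trans hch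
  apply Real.exp_le_exp.mpr
  have hmul := mul_le_mul_of_nonneg_left hD (sq_nonneg ε)
  nlinarith [hmul]

lemma density_nonneg {n : ℕ} (ρ : ℝ) (hρ : ρ ≤ 1/2) (hρ0 : 0 ≤ ρ)
    (P : Fin n → Bool) (g : PairIdx n → Bool) : 0 ≤ plantedDensity n ρ P g := by
  unfold plantedDensity
  apply mul_nonneg (by positivity)
  apply Finset.prod_nonneg
  intro p _
  split <;> linarith

set_option maxHeartbeats 2000000

open Classical in
theorem planted_cc_dichotomy (ε : ℕ → ℝ) (hub : ∀ n, ε n < 0.001)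
    (hlb : Filter.Tendsto (fun n => ε n * Real.sqrt ((n : ℝ) / Real.log n))
      Filter.atTop Filter.atTop) :
    ∃ α : ℝ, 0 < α ∧ ∃ N : ℕ, ∀ n : ℕ, N ≤ n →
      1 - (n : ℝ) ^ (-α) ≤
        ∑ P : Fin n → Bool, ∑ g : PairIdx n → Bool,
          plantedDensity n (100 * ε n) P g *
            (if ∀ c : Fin n → Fin n,
                (∃ i j : Fin n, i ≠ j ∧
                  0.9 * (n : ℝ) <
                    ((Finset.univ.filter (fun t => c t = i ∧ P t = false)).card : ℝ)
                      + ((Finset.univ.filter (fun t => c t = j ∧ P t = true)).card : ℝ))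
                ∨ ccCost g P + ε n * (n : ℝ) ^ 2 ≤ ccCost g c
             then 1 else 0) := by
  classical
  obtain ⟨N₁, hN₁⟩ := Filter.eventually_atTop.mp (hlb.eventually_ge_atTop 2)
  refine ⟨1, one_pos, max N₁ 160000, fun n hn => ?_⟩
  have hnN1 : N₁ ≤ n := le_trans (le_max_left _ _) hn
  have hn16 : 160000 ≤ n := le_trans (le_max_right _ _) hn
  have hn0 : 0 < n := by omega
  have hnR : (160000:ℝ) ≤ (n:ℝ) := by exact_mod_cast hn16
  have hnR0 : (0:ℝ) < (n:ℝ) := by exact_mod_cast hn0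
  have hn1R : (1:ℝ) < (n:ℝ) := by
    have : 1 < n := by omega
    exact_mod_cast this
  have hlog : 0 < Real.log n := Real.log_pos hn1R
  have hsq2 : 2 ≤ ε n * Real.sqrt ((n : ℝ) / Real.log n) := hN₁ n hnN1
  have hε : 0 < ε n := by
    rcases le_or_gt (ε n) 0 with h | h
    · have h2 : ε n * Real.sqrt ((n : ℝ) / Real.log n) ≤ 0 :=
        mul_nonpos_of_nonpos_of_nonneg h (Real.sqrt_nonneg _)
      linarith
    · exact h
  have hε3 : ε n < 0.001 := hub n
  have hq0 : (0:ℝ) ≤ (n:ℝ)/Real.log n := by positivity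
  have hs4 : 4 ≤ (ε n)^2 * ((n:ℝ)/Real.log n) := by
    have h2 : (2:ℝ) * 2 ≤ (ε n * Real.sqrt ((n : ℝ) / Real.log n))
        * (ε n * Real.sqrt ((n : ℝ) / Real.log n)) :=
      mul_le_mul hsq2 hsq2 (by norm_num) (by linarith)
    have h3 : Real.sqrt ((n:ℝ)/Real.log n) * Real.sqrt ((n:ℝ)/Real.log n)
        = (n:ℝ)/Real.log n := Real.mul_self_sqrt hq0
    nlinarith
  have hchern : 4 * ((n:ℝ) * Real.log n) ≤ (ε n)^2 * (n:ℝ)^2 := by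
    have h1 := mul_le_mul_of_nonneg_right hs4 (le_of_lt hlog)
    rw [mul_assoc, div_mul_cancel₀ _ (ne_of_gt hlog)] at h1
    have h2 := mul_le_mul_of_nonneg_right h1 (le_of_lt hnR0)
    nlinarith
  set E := Real.exp (-2 * (ε n)^2 * (n:ℝ)^2) with hEdef
  have hdnn : ∀ (P : Fin n → Bool) (g : PairIdx n → Bool),
      0 ≤ plantedDensity n (100 * ε n) P g :=
    fun P g => density_nonneg _ (by linarith) (by linarith) P g
  have hmassP : ∀ P : Fin n → Bool,
      ∑ g : PairIdx n → Bool, plantedDensity n (100 * ε n) P g = ((2:ℝ)^n)⁻¹ := by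
    intro P
    unfold plantedDensity
    rw [← Finset.mul_sum, pair_mass, mul_one]
  have hcard2 : (Finset.univ : Finset (Fin n → Bool)).card = 2^n := by
    rw [Finset.card_univ, Fintype.card_fun, Fintype.card_bool, Fintype.card_fin]
  have mass : ∑ P : Fin n → Bool, ∑ g : PairIdx n → Bool,
      plantedDensity n (100 * ε n) P g = 1 := by
    rw [Finset.sum_congr rfl (fun P _ => hmassP P), Finset.sum_const, hcard2,
      nsmul_eq_mul, Nat.cast_pow, Nat.cast_ofNat]
    rw [mul_inv_cancel₀ (by positivity)]
  rw [Real.rpow_neg_one]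
  -- rewrite indicator as complement
  have hgen : ∀ (r : ℝ) (X : Prop) (hX : Decidable X),
      r * (@ite _ X hX (1:ℝ) 0) = r - r * (@ite _ X hX (0:ℝ) 1) := by
    intro r X hX
    split <;> ring
  simp only [hgen]
  rw [Finset.sum_congr rfl (fun P _ => Finset.sum_sub_distrib _ _), Finset.sum_sub_distrib,
    mass]
  have main : ∑ P : Fin n → Bool, ∑ g : PairIdx n → Bool,
      plantedDensity n (100 * ε n) P g *
        (if ∀ c : Fin n → Fin n,
            (∃ i j : Fin n, i ≠ j ∧
              0.9 * (n : ℝ) <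
                ((Finset.univ.filter (fun t => c t = i ∧ P t = false)).card : ℝ)
                  + ((Finset.univ.filter (fun t => c t = j ∧ P t = true)).card : ℝ))
            ∨ ccCost g P + ε n * (n : ℝ) ^ 2 ≤ ccCost g c
         then (0:ℝ) else 1) ≤ (n:ℝ)⁻¹ := by
    have hperP : ∀ P : Fin n → Bool,
        ∑ g : PairIdx n → Bool, plantedDensity n (100 * ε n) P g *
          (if ∀ c : Fin n → Fin n,
              (∃ i j : Fin n, i ≠ j ∧
                0.9 * (n : ℝ) <
                  ((Finset.univ.filter (fun t => c t = i ∧ P t = false)).card : ℝ)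
                    + ((Finset.univ.filter (fun t => c t = j ∧ P t = true)).card : ℝ))
              ∨ ccCost g P + ε n * (n : ℝ) ^ 2 ≤ ccCost g c
           then (0:ℝ) else 1)
        ≤ ((2:ℝ)^n)⁻¹ * ((n:ℝ)^n * E)
          + ((2:ℝ)^n)⁻¹ * (if 0.6*(n:ℝ) <
              ((univ.filter fun t => P t = false).card : ℝ) then (1:ℝ) else 0)
          + ((2:ℝ)^n)⁻¹ * (if 0.6*(n:ℝ) <
              ((univ.filter fun t => P t = true).card : ℝ) then (1:ℝ) else 0) := by
      intro P
      have ht2nn : (0:ℝ) ≤ ((2:ℝ)^n)⁻¹ * (if 0.6*(n:ℝ) <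
          ((univ.filter fun t => P t = false).card : ℝ) then (1:ℝ) else 0) := by
        apply mul_nonneg (by positivity)
        split <;> norm_num
      have ht3nn : (0:ℝ) ≤ ((2:ℝ)^n)⁻¹ * (if 0.6*(n:ℝ) <
          ((univ.filter fun t => P t = true).card : ℝ) then (1:ℝ) else 0) := by
        apply mul_nonneg (by positivity)
        split <;> norm_num
      have ht1nn : (0:ℝ) ≤ ((2:ℝ)^n)⁻¹ * ((n:ℝ)^n * E) := by
        apply mul_nonneg (by positivity)
        apply mul_nonneg (by positivity) (Real.exp_nonneg _)
      by_cases hbal : 0.4*(n:ℝ) ≤ ((univ.filter fun t => P t = false).card : ℝ)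
          ∧ 0.4*(n:ℝ) ≤ ((univ.filter fun t => P t = true).card : ℝ)
      · -- balanced case
        have hcore : ∑ g : PairIdx n → Bool,
            (∏ p : PairIdx n, (if ((g p = true) ↔ (P p.val.1 = P p.val.2))
              then 1/2 + 100 * ε n else 1/2 - 100 * ε n)) *
            (if ∀ c : Fin n → Fin n,
                (∃ i j : Fin n, i ≠ j ∧
                  0.9 * (n : ℝ) <
                    ((Finset.univ.filter (fun t => c t = i ∧ P t = false)).card : ℝ)
                      + ((Finset.univ.filter (fun t => c t = j ∧ P t = true)).card : ℝ))
                ∨ ccCost g P + ε n * (n : ℝ) ^ 2 ≤ ccCost g c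
             then (0:ℝ) else 1)
            ≤ (n:ℝ)^n * E := by
          have hwnn : ∀ (g : PairIdx n → Bool), 0 ≤ ∏ p : PairIdx n,
              (if ((g p = true) ↔ (P p.val.1 = P p.val.2))
                then 1/2 + 100 * ε n else 1/2 - 100 * ε n) := by
            intro g
            apply Finset.prod_nonneg
            intro p _
            split <;> linarith
          have hpoint : ∀ g : PairIdx n → Bool,
              (if ∀ c : Fin n → Fin n,
                  (∃ i j : Fin n, i ≠ j ∧
                    0.9 * (n : ℝ) <
                      ((Finset.univ.filter (fun t => c t = i ∧ P t = false)).card : ℝ)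
                        + ((Finset.univ.filter (fun t => c t = j ∧ P t = true)).card : ℝ))
                  ∨ ccCost g P + ε n * (n : ℝ) ^ 2 ≤ ccCost g c
               then (0:ℝ) else 1)
              ≤ ∑ c : Fin n → Fin n,
                (if (¬ ∃ i j : Fin n, i ≠ j ∧
                    0.9 * (n : ℝ) <
                      ((Finset.univ.filter (fun t => c t = i ∧ P t = false)).card : ℝ)
                        + ((Finset.univ.filter (fun t => c t = j ∧ P t = true)).card : ℝ))
                    ∧ ccCost g c < ccCost g P + ε n * (n : ℝ) ^ 2
                 then (1:ℝ) else 0) := by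
            intro g
            split
            · apply Finset.sum_nonneg
              intro c _
              split <;> norm_num
            · rename_i hC
              rw [not_forall] at hC
              obtain ⟨c₀, hc₀⟩ := hC
              rw [not_or] at hc₀
              have h1 : (if (¬ ∃ i j : Fin n, i ≠ j ∧
                  0.9 * (n : ℝ) <
                    ((Finset.univ.filter (fun t => c₀ t = i ∧ P t = false)).card : ℝ)
                      + ((Finset.univ.filter (fun t => c₀ t = j ∧ P t = true)).card : ℝ))
                  ∧ ccCost g c₀ < ccCost g P + ε n * (n : ℝ) ^ 2
               then (1:ℝ) else 0) = 1 := if_pos ⟨hc₀.1, not_le.mp hc₀.2⟩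
              have h2 := Finset.single_le_sum (f := fun c : Fin n → Fin n =>
                (if (¬ ∃ i j : Fin n, i ≠ j ∧
                  0.9 * (n : ℝ) <
                    ((Finset.univ.filter (fun t => c t = i ∧ P t = false)).card : ℝ)
                      + ((Finset.univ.filter (fun t => c t = j ∧ P t = true)).card : ℝ))
                  ∧ ccCost g c < ccCost g P + ε n * (n : ℝ) ^ 2
                 then (1:ℝ) else 0))
                (fun c _ => by split <;> norm_num) (mem_univ c₀)
              exact le_trans (le_of_eq h1.symm) h2
          have hpercase : ∀ c : Fin n → Fin n,
              ∑ g : PairIdx n → Bool,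
                (∏ p : PairIdx n, (if ((g p = true) ↔ (P p.val.1 = P p.val.2))
                  then 1/2 + 100 * ε n else 1/2 - 100 * ε n)) *
                (if (¬ ∃ i j : Fin n, i ≠ j ∧
                    0.9 * (n : ℝ) <
                      ((Finset.univ.filter (fun t => c t = i ∧ P t = false)).card : ℝ)
                        + ((Finset.univ.filter (fun t => c t = j ∧ P t = true)).card : ℝ))
                    ∧ ccCost g c < ccCost g P + ε n * (n : ℝ) ^ 2
                 then (1:ℝ) else 0)
              ≤ E := by
            intro c
            by_cases hA : ∃ i j : Fin n, i ≠ j ∧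
                0.9 * (n : ℝ) <
                  ((Finset.univ.filter (fun t => c t = i ∧ P t = false)).card : ℝ)
                    + ((Finset.univ.filter (fun t => c t = j ∧ P t = true)).card : ℝ)
            · have hzero : ∀ g : PairIdx n → Bool,
                  (if (¬ ∃ i j : Fin n, i ≠ j ∧
                    0.9 * (n : ℝ) <
                      ((Finset.univ.filter (fun t => c t = i ∧ P t = false)).card : ℝ)
                        + ((Finset.univ.filter (fun t => c t = j ∧ P t = true)).card : ℝ))
                    ∧ ccCost g c < ccCost g P + ε n * (n : ℝ) ^ 2
                   then (1:ℝ) else 0) = 0 := by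
                intro g
                apply if_neg
                rintro ⟨h1, -⟩
                exact h1 hA
              calc ∑ g : PairIdx n → Bool, _ * _
                  = ∑ g : PairIdx n → Bool, (0:ℝ) := by
                    apply Finset.sum_congr rfl
                    intro g _
                    rw [hzero g, mul_zero]
                _ = 0 := Finset.sum_const_zero
                _ ≤ E := Real.exp_nonneg _
            · have hred : ∀ g : PairIdx n → Bool,
                  (if (¬ ∃ i j : Fin n, i ≠ j ∧
                    0.9 * (n : ℝ) <
                      ((Finset.univ.filter (fun t => c t = i ∧ P t = false)).card : ℝ)
                        + ((Finset.univ.filter (fun t => c t = j ∧ P t = true)).card : ℝ))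
                    ∧ ccCost g c < ccCost g P + ε n * (n : ℝ) ^ 2
                   then (1:ℝ) else 0)
                  = (if ccCost g c < ccCost g P + ε n * (n : ℝ) ^ 2 then (1:ℝ) else 0) := by
                intro g
                exact if_congr (and_iff_right hA) rfl rfl
              have H : ∀ i j : Fin n, i ≠ j →
                  ((univ.filter fun t => c t = i ∧ P t = false).card : ℝ)
                    + ((univ.filter fun t => c t = j ∧ P t = true).card : ℝ) ≤ 0.9 * n := by
                intro i j hij
                by_contra hgt
                exact hA ⟨i, j, hij, not_le.mp hgt⟩
              rw [Finset.sum_congr rfl (fun g _ => by rw [hred g])]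
              exact perc_bound (ε n) hε (le_of_lt hε3) hn0 P c hbal.1 hbal.2 H
          calc ∑ g : PairIdx n → Bool,
              (∏ p : PairIdx n, (if ((g p = true) ↔ (P p.val.1 = P p.val.2))
                then 1/2 + 100 * ε n else 1/2 - 100 * ε n)) *
              (if ∀ c : Fin n → Fin n,
                  (∃ i j : Fin n, i ≠ j ∧
                    0.9 * (n : ℝ) <
                      ((Finset.univ.filter (fun t => c t = i ∧ P t = false)).card : ℝ)
                        + ((Finset.univ.filter (fun t => c t = j ∧ P t = true)).card : ℝ))
                  ∨ ccCost g P + ε n * (n : ℝ) ^ 2 ≤ ccCost g c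
               then (0:ℝ) else 1)
              ≤ ∑ g : PairIdx n → Bool,
                (∏ p : PairIdx n, (if ((g p = true) ↔ (P p.val.1 = P p.val.2))
                  then 1/2 + 100 * ε n else 1/2 - 100 * ε n)) *
                ∑ c : Fin n → Fin n,
                  (if (¬ ∃ i j : Fin n, i ≠ j ∧
                      0.9 * (n : ℝ) <
                        ((Finset.univ.filter (fun t => c t = i ∧ P t = false)).card : ℝ)
                          + ((Finset.univ.filter (fun t => c t = j ∧ P t = true)).card : ℝ))
                      ∧ ccCost g c < ccCost g P + ε n * (n : ℝ) ^ 2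
                   then (1:ℝ) else 0) := by
                apply Finset.sum_le_sum
                intro g _
                exact mul_le_mul_of_nonneg_left (hpoint g) (hwnn g)
            _ = ∑ c : Fin n → Fin n, ∑ g : PairIdx n → Bool,
                (∏ p : PairIdx n, (if ((g p = true) ↔ (P p.val.1 = P p.val.2))
                  then 1/2 + 100 * ε n else 1/2 - 100 * ε n)) *
                (if (¬ ∃ i j : Fin n, i ≠ j ∧
                    0.9 * (n : ℝ) <
                      ((Finset.univ.filter (fun t => c t = i ∧ P t = false)).card : ℝ)
                        + ((Finset.univ.filter (fun t => c t = j ∧ P t = true)).card : ℝ))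
                    ∧ ccCost g c < ccCost g P + ε n * (n : ℝ) ^ 2
                 then (1:ℝ) else 0) := by
                rw [Finset.sum_congr rfl (fun g _ => Finset.mul_sum _ _ _)]
                exact Finset.sum_comm
            _ ≤ ∑ _c : Fin n → Fin n, E := Finset.sum_le_sum (fun c _ => hpercase c)
            _ = (n:ℝ)^n * E := by
                rw [Finset.sum_const, Finset.card_univ, Fintype.card_fun, Fintype.card_fin,
                  nsmul_eq_mul, Nat.cast_pow]
        have hstep : ∑ g : PairIdx n → Bool, plantedDensity n (100 * ε n) P g *
            (if ∀ c : Fin n → Fin n,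
                (∃ i j : Fin n, i ≠ j ∧
                  0.9 * (n : ℝ) <
                    ((Finset.univ.filter (fun t => c t = i ∧ P t = false)).card : ℝ)
                      + ((Finset.univ.filter (fun t => c t = j ∧ P t = true)).card : ℝ))
                ∨ ccCost g P + ε n * (n : ℝ) ^ 2 ≤ ccCost g c
             then (0:ℝ) else 1)
            ≤ ((2:ℝ)^n)⁻¹ * ((n:ℝ)^n * E) := by
          have heq : ∀ g : PairIdx n → Bool, plantedDensity n (100 * ε n) P g *
              (if ∀ c : Fin n → Fin n,
                  (∃ i j : Fin n, i ≠ j ∧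
                    0.9 * (n : ℝ) <
                      ((Finset.univ.filter (fun t => c t = i ∧ P t = false)).card : ℝ)
                        + ((Finset.univ.filter (fun t => c t = j ∧ P t = true)).card : ℝ))
                  ∨ ccCost g P + ε n * (n : ℝ) ^ 2 ≤ ccCost g c
               then (0:ℝ) else 1)
              = ((2:ℝ)^n)⁻¹ * ((∏ p : PairIdx n, (if ((g p = true) ↔ (P p.val.1 = P p.val.2))
                  then 1/2 + 100 * ε n else 1/2 - 100 * ε n)) *
                (if ∀ c : Fin n → Fin n,
                    (∃ i j : Fin n, i ≠ j ∧
                      0.9 * (n : ℝ) <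
                        ((Finset.univ.filter (fun t => c t = i ∧ P t = false)).card : ℝ)
                          + ((Finset.univ.filter (fun t => c t = j ∧ P t = true)).card : ℝ))
                    ∨ ccCost g P + ε n * (n : ℝ) ^ 2 ≤ ccCost g c
                 then (0:ℝ) else 1)) := by
            intro g
            unfold plantedDensity
            ring
          rw [Finset.sum_congr rfl (fun g _ => heq g), ← Finset.mul_sum]
          exact mul_le_mul_of_nonneg_left hcore (by positivity)
        linarith
      · -- unbalanced case
        have hTle : ∑ g : PairIdx n → Bool, plantedDensity n (100 * ε n) P g *
            (if ∀ c : Fin n → Fin n,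
                (∃ i j : Fin n, i ≠ j ∧
                  0.9 * (n : ℝ) <
                    ((Finset.univ.filter (fun t => c t = i ∧ P t = false)).card : ℝ)
                      + ((Finset.univ.filter (fun t => c t = j ∧ P t = true)).card : ℝ))
                ∨ ccCost g P + ε n * (n : ℝ) ^ 2 ≤ ccCost g c
             then (0:ℝ) else 1)
            ≤ ((2:ℝ)^n)⁻¹ := by
          rw [← hmassP P]
          apply Finset.sum_le_sum
          intro g _
          have hd := hdnn P g
          have hile : (if ∀ c : Fin n → Fin n,
              (∃ i j : Fin n, i ≠ j ∧
                0.9 * (n : ℝ) <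
                  ((Finset.univ.filter (fun t => c t = i ∧ P t = false)).card : ℝ)
                    + ((Finset.univ.filter (fun t => c t = j ∧ P t = true)).card : ℝ))
              ∨ ccCost g P + ε n * (n : ℝ) ^ 2 ≤ ccCost g c
           then (0:ℝ) else 1) ≤ 1 := by
            split <;> norm_num
          calc plantedDensity n (100 * ε n) P g * _ ≤ plantedDensity n (100 * ε n) P g * 1 :=
            mul_le_mul_of_nonneg_left hile hd
          _ = plantedDensity n (100 * ε n) P g := mul_one _
        have hlabs := lab_sum P
        rcases not_and_or.mp hbal with h | h
        · push_neg at h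
          have h2 : 0.6*(n:ℝ) < ((univ.filter fun t => P t = true).card : ℝ) := by linarith
          rw [if_pos h2]
          linarith
        · push_neg at h
          have h2 : 0.6*(n:ℝ) < ((univ.filter fun t => P t = false).card : ℝ) := by linarith
          rw [if_pos h2]
          linarith
    have hcoinf := coin_chernoff n false
    have hcoint := coin_chernoff n true
    have hconst : ∑ _P : Fin n → Bool, ((2:ℝ)^n)⁻¹ * ((n:ℝ)^n * E) = (n:ℝ)^n * E := by
      rw [Finset.sum_const, hcard2, nsmul_eq_mul, Nat.cast_pow, Nat.cast_ofNat]
      rw [← mul_assoc, mul_inv_cancel₀ (by positivity : ((2:ℝ)^n) ≠ 0), one_mul]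
    calc ∑ P : Fin n → Bool, ∑ g : PairIdx n → Bool,
        plantedDensity n (100 * ε n) P g *
          (if ∀ c : Fin n → Fin n,
              (∃ i j : Fin n, i ≠ j ∧
                0.9 * (n : ℝ) <
                  ((Finset.univ.filter (fun t => c t = i ∧ P t = false)).card : ℝ)
                    + ((Finset.univ.filter (fun t => c t = j ∧ P t = true)).card : ℝ))
              ∨ ccCost g P + ε n * (n : ℝ) ^ 2 ≤ ccCost g c
           then (0:ℝ) else 1)
        ≤ ∑ P : Fin n → Bool, (((2:ℝ)^n)⁻¹ * ((n:ℝ)^n * E)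
          + ((2:ℝ)^n)⁻¹ * (if 0.6*(n:ℝ) <
              ((univ.filter fun t => P t = false).card : ℝ) then (1:ℝ) else 0)
          + ((2:ℝ)^n)⁻¹ * (if 0.6*(n:ℝ) <
              ((univ.filter fun t => P t = true).card : ℝ) then (1:ℝ) else 0)) :=
          Finset.sum_le_sum (fun P _ => hperP P)
      _ = (∑ _P : Fin n → Bool, ((2:ℝ)^n)⁻¹ * ((n:ℝ)^n * E))
          + (∑ P : Fin n → Bool, ((2:ℝ)^n)⁻¹ * (if 0.6*(n:ℝ) <
              ((univ.filter fun t => P t = false).card : ℝ) then (1:ℝ) else 0))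
          + (∑ P : Fin n → Bool, ((2:ℝ)^n)⁻¹ * (if 0.6*(n:ℝ) <
              ((univ.filter fun t => P t = true).card : ℝ) then (1:ℝ) else 0)) := by
          rw [Finset.sum_add_distrib, Finset.sum_add_distrib]
      _ ≤ (n:ℝ)^n * E + Real.exp (-0.01*(n:ℝ)) + Real.exp (-0.01*(n:ℝ)) := by
          rw [hconst]
          exact add_le_add (add_le_add le_rfl hcoinf) hcoint
      _ ≤ (n:ℝ)⁻¹ := by
          have e1 : ((n:ℝ))^n = Real.exp ((n:ℕ) * Real.log n) := by
            rw [Real.exp_nat_mul, Real.exp_log hnR0]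
          have e2 : E ≤ Real.exp (-(8:ℝ) * ((n:ℝ) * Real.log n)) := by
            rw [hEdef]
            apply Real.exp_le_exp.mpr
            nlinarith
          have hnexp : ((n:ℝ))^n * E ≤ ((n:ℝ)^2)⁻¹ := by
            calc ((n:ℝ))^n * E
                ≤ Real.exp ((n:ℕ) * Real.log n) * Real.exp (-(8:ℝ) * ((n:ℝ) * Real.log n)) := by
                  rw [e1]
                  exact mul_le_mul_of_nonneg_left e2 (Real.exp_nonneg _)
              _ = Real.exp ((n:ℝ) * Real.log n - 8 * ((n:ℝ) * Real.log n)) := by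
                  rw [← Real.exp_add]
                  congr 1
                  push_cast
                  ring
              _ ≤ Real.exp (-(2:ℝ) * Real.log n) := by
                  apply Real.exp_le_exp.mpr
                  nlinarith [hlog, hnR]
              _ = ((n:ℝ)^2)⁻¹ := by
                  rw [show (-(2:ℝ) * Real.log n) = -Real.log ((n:ℝ)^2) by
                    rw [Real.log_pow]; push_cast; ring]
                  rw [Real.exp_neg, Real.exp_log (by positivity)]
          have h4n : 4*(n:ℝ) ≤ Real.exp (0.01 * n) := by
            have ha := Real.add_one_le_exp (0.005*(n:ℝ))
            have hb : Real.exp (0.01*(n:ℝ)) = Real.exp (0.005*n) * Real.exp (0.005*n) := by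
              rw [← Real.exp_add]
              congr 1
              ring
            have hc : (0.005*(n:ℝ)+1) * (0.005*(n:ℝ)+1)
                ≤ Real.exp (0.005*(n:ℝ)) * Real.exp (0.005*(n:ℝ)) :=
              mul_le_mul ha ha (by positivity) (Real.exp_nonneg _)
            nlinarith [hc, hnR, hb]
          have h5 : Real.exp (-0.01*(n:ℝ)) ≤ (4*(n:ℝ))⁻¹ := by
            rw [show (-0.01*(n:ℝ)) = -(0.01*(n:ℝ)) by ring, Real.exp_neg]
            exact inv_anti₀ (by positivity) h4n
          have h6 : ((n:ℝ)^2)⁻¹ ≤ (2*(n:ℝ))⁻¹ :=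
            inv_anti₀ (by positivity) (by nlinarith)
          have h7 : (2*(n:ℝ))⁻¹ + (4*(n:ℝ))⁻¹ + (4*(n:ℝ))⁻¹ = (n:ℝ)⁻¹ := by
            field_simp
            ring
          linarith
  linarith [main]
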